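/- Pullback criterion on polyhedral complexes: Let 𝒞', 𝒞 be polyhedral complexes in ℝ^{r'}, ℝ^r, Ω' ⊂ |𝒞'|, Ω ⊂ |𝒞| open, s_F : V' → V a smooth map between open neighbourhoods with s_F(Ω') ⊂ Ω, and L_F : ℝ^{r'} → ℝ^r linear. Suppose there are polyhedral complexes 𝒟', 𝒟 with Ω' ⊂ |𝒟'|, Ω ⊂ |𝒟| open, such that for every maximal σ' ∈ 𝒟' there exists a maximal σ ∈ 𝒟 with s_F(σ' ∩ Ω') ⊂ σ and L_F(L_{σ'}) ⊂ L_σ. Then for any superform β on an open neighbourhood W of Ω in ℝ^r whose restriction to Ω vanishes (i.e., β vanishes on all tuples of tangent vectors from L_σ at points of σ ∩ Ω, for all σ ∈ 𝒞), the pullback F*β := (s_F)* ⊗ (L_F)* (β) restricts to zero on Ω'. -/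

import Mathlib

open Set

noncomputable section

abbrev Vec (r : ℕ) : Type := Fin r → ℝ

/-- The data of a superform of bidegree `(p,q)` on `ℝ^r`: a pointwise evaluation
on `p` tangent vectors (the `d'`-block) and `q` tangent vectors (the `d''`-block). -/
abbrev SFd (r p q : ℕ) : Type :=
  Vec r → (Fin p → Vec r) → (Fin q → Vec r) → ℝ

/-- `g` is multilinear and alternating in its `n` vector arguments. -/
def IsAltML {r n : ℕ} (g : (Fin n → Vec r) → ℝ) : Prop :=
  (∀ (v : Fin n → Vec r) (i : Fin n) (x y : Vec r),
      g (Function.update v i (x + y)) =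
        g (Function.update v i x) + g (Function.update v i y)) ∧
  (∀ (v : Fin n → Vec r) (i : Fin n) (c : ℝ) (x : Vec r),
      g (Function.update v i (c • x)) = c * g (Function.update v i x)) ∧
  (∀ (v : Fin n → Vec r) (i j : Fin n), i ≠ j → v i = v j → g v = 0)

/-- `α` is a smooth superform of bidegree `(p,q)` on the set `U ⊆ ℝ^r`. -/
def IsSuperformOn {r p q : ℕ} (U : Set (Vec r)) (α : SFd r p q) : Prop :=
  (∀ x ∈ U, ∀ w, IsAltML fun v => α x v w) ∧
  (∀ x ∈ U, ∀ v, IsAltML fun w => α x v w) ∧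
  ∀ v w, ContDiffOn ℝ (⊤ : ℕ∞) (fun x => α x v w) U

/-- The differential `d'` of superforms, acting on the `d'`-block. -/
def dP {r p q : ℕ} (α : SFd r p q) : SFd r (p + 1) q := fun x v w =>
  ∑ i : Fin (p + 1),
    (-1 : ℝ) ^ (i : ℕ) * fderiv ℝ (fun y => α y (v ∘ i.succAbove) w) x (v i)

/-- The differential `d''` of superforms, acting on the `d''`-block,
with the sign `(-1)^p`. -/
def dPP {r p q : ℕ} (α : SFd r p q) : SFd r p (q + 1) := fun x v w =>
  (-1 : ℝ) ^ p * ∑ j : Fin (q + 1),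
    (-1 : ℝ) ^ (j : ℕ) * fderiv ℝ (fun y => α y v (w ∘ j.succAbove)) x (w j)

/-- A (convex) polyhedron in `ℝ^r`: a finite intersection of closed half-spaces. -/
def IsPolyhedron {r : ℕ} (σ : Set (Vec r)) : Prop :=
  ∃ (n : ℕ) (f : Fin n → (Vec r →ₗ[ℝ] ℝ)) (c : Fin n → ℝ),
    σ = {x | ∀ i, f i x ≤ c i}

/-- `τ` is a face of `σ`: either `σ` itself, or the subset of `σ` where a linear
functional bounded above on `σ` attains a given bound. -/
def IsFaceOf {r : ℕ} (τ σ : Set (Vec r)) : Prop :=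
  τ = σ ∨ ∃ (g : Vec r →ₗ[ℝ] ℝ) (c : ℝ),
    (∀ x ∈ σ, g x ≤ c) ∧ τ = {x ∈ σ | g x = c}

/-- A polyhedral complex in `ℝ^r`: a finite set of convex polyhedra, closed under
taking faces, such that the intersection of any two members is a face of both. -/
structure PolyComplex (r : ℕ) where
  polys : Set (Set (Vec r))
  finite : polys.Finite
  poly_mem : ∀ σ ∈ polys, IsPolyhedron σ
  face_mem : ∀ σ ∈ polys, ∀ τ, IsFaceOf τ σ → τ ∈ polys
  inter_face : ∀ σ ∈ polys, ∀ τ ∈ polys, IsFaceOf (σ ∩ τ) σ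

/-- The support of a polyhedral complex. -/
def PolyComplex.support {r : ℕ} (C : PolyComplex r) : Set (Vec r) :=
  ⋃ σ ∈ C.polys, σ

/-- The relative interior of a polyhedron: the polyhedron minus all its proper faces. -/
def relint {r : ℕ} (σ : Set (Vec r)) : Set (Vec r) :=
  {x ∈ σ | ∀ τ, IsFaceOf τ σ → τ ≠ σ → x ∉ τ}

/-- The polyhedral star of `σ` in `C`: the union of the relative interiors of all
members of `C` having `σ` as a face. -/
def polyStar {r : ℕ} (C : PolyComplex r) (σ : Set (Vec r)) : Set (Vec r) :=
  ⋃ τ ∈ {τ ∈ C.polys | IsFaceOf σ τ}, relint τ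

/-- `Ω` is an open subset of the support of `C` (subspace topology). -/
def OpenInSupport {r : ℕ} (C : PolyComplex r) (Ω : Set (Vec r)) : Prop :=
  ∃ U : Set (Vec r), IsOpen U ∧ Ω = U ∩ C.support

/-- `S` is star shaped with centre `z`. -/
def StarShapedWith {r : ℕ} (z : Vec r) (S : Set (Vec r)) : Prop :=
  ∀ x ∈ S, ∀ t ∈ Icc (0 : ℝ) 1, z + t • (x - z) ∈ S

/-- `Ω` is polyhedrally star shaped with centre `z`: there is a polyhedral complex `D`
such that `Ω` is an open subset of `|D|` and `σ ∩ Ω` is star shaped with centre `z`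
for every maximal `σ ∈ D`. -/
def PolyStarShaped {r : ℕ} (z : Vec r) (Ω : Set (Vec r)) : Prop :=
  ∃ D : PolyComplex r, OpenInSupport D Ω ∧
    ∀ σ ∈ D.polys, (∀ τ ∈ D.polys, IsFaceOf σ τ → τ = σ) →
      StarShapedWith z (σ ∩ Ω)

/-- Pullback of superforms along a pair `F = (s_F, L_F)`: the differential of the
smooth map `s_F` acts on the `d'`-block and the linear map `L_F` on the `d''`-block. -/
def pairPB {r' r p q : ℕ} (sF : Vec r' → Vec r) (LF : Vec r' → Vec r)
    (β : SFd r p q) : SFd r' p q := fun x v w =>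
  β (sF x) (fun i => fderiv ℝ sF x (v i)) (fun j => LF (w j))

/-- `β` restricts to zero on `Ω` with respect to the complex `C`: it vanishes on
tuples of tangent vectors from `L_σ` at points of `σ ∩ Ω`, for all `σ ∈ C`. -/
def RestrictsToZero {r p q : ℕ} (C : PolyComplex r) (Ω : Set (Vec r))
    (β : SFd r p q) : Prop :=
  ∀ σ ∈ C.polys, ∀ x ∈ σ ∩ Ω, ∀ (v : Fin p → Vec r) (w : Fin q → Vec r),
    (∀ i, v i ∈ vectorSpan ℝ σ) → (∀ j, w j ∈ vectorSpan ℝ σ) → β x v w = 0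

/-- `σ` is a maximal polyhedron of the complex `D`. -/
def IsMaximalIn {r : ℕ} (D : PolyComplex r) (σ : Set (Vec r)) : Prop :=
  σ ∈ D.polys ∧ ∀ τ ∈ D.polys, IsFaceOf σ τ → τ = σ

lemma poly_closed {r : ℕ} {σ : Set (Vec r)} (h : IsPolyhedron σ) : IsClosed σ := by
  obtain ⟨n, f, c, rfl⟩ := h
  have : {x : Vec r | ∀ i, f i x ≤ c i} = ⋂ i, {x | f i x ≤ c i} := by
    ext x; simp
  rw [this]
  exact isClosed_iInter fun i =>
    isClosed_le (f i).continuous_of_finiteDimensional continuous_const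

lemma poly_convex {r : ℕ} {σ : Set (Vec r)} (h : IsPolyhedron σ) : Convex ℝ σ := by
  obtain ⟨n, f, c, rfl⟩ := h
  intro x hx y hy a b ha hb hab
  intro i
  have := (f i).map_add (a • x) (b • y)
  simp only [map_smul, smul_eq_mul] at this ⊢
  calc f i (a • x + b • y) = a * f i x + b * f i y := by
        rw [map_add, map_smul, map_smul]; simp [smul_eq_mul]
    _ ≤ a * c i + b * c i := by
        gcongr; exacts [hx i, hy i]
    _ = c i := by rw [← add_mul, hab, one_mul]

lemma ml_expand {r n : ℕ} (g : (Fin n → Vec r) → ℝ) (hg : IsAltML g) (a : Fin n → Vec r) :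
    g a = ∑ k : Fin n → Fin r, (∏ i, a i (k i)) * g (fun i => Pi.single (k i) 1) := by
  classical
  let M : MultilinearMap ℝ (fun _ : Fin n => Vec r) ℝ :=
    { toFun := g
      map_update_add' := by
        intro inst m i x y
        have h : inst = instDecidableEqFin n := Subsingleton.elim _ _
        subst h
        exact hg.1 m i x y
      map_update_smul' := by
        intro inst m i c x
        have h : inst = instDecidableEqFin n := Subsingleton.elim _ _
        subst h
        rw [smul_eq_mul]
        exact hg.2.1 m i c x }
  have ha : a = fun i => ∑ j : Fin r, a i j • (Pi.single j 1 : Vec r) := by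
    funext i
    rw [show (fun j => a i j • (Pi.single j 1 : Vec r)) = fun j => Pi.single j (a i j) by
      funext j; rw [← Pi.single_smul, smul_eq_mul, mul_one]]
    rw [Finset.univ_sum_single]
  calc g a = M (fun i => ∑ j : Fin r, a i j • (Pi.single j 1 : Vec r)) := by rw [← ha]; rfl
    _ = ∑ k : Fin n → Fin r, M (fun i => a i (k i) • (Pi.single (k i) 1 : Vec r)) := M.map_sum _
    _ = ∑ k : Fin n → Fin r, (∏ i, a i (k i)) * g (fun i => Pi.single (k i) 1) := by
        refine Finset.sum_congr rfl fun k _ => ?_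
        rw [M.map_smul_univ, smul_eq_mul]; rfl

lemma IsFaceOf.subset {r : ℕ} {τ σ : Set (Vec r)} (h : IsFaceOf τ σ) : τ ⊆ σ := by
  rcases h with rfl | ⟨g, c, _, rfl⟩
  · exact subset_rfl
  · exact fun x hx => hx.1

/-- Finite-cover lemma: a nonempty relatively open subset of `σ` covered by finitely
many closed sets contains a relatively open piece inside one of the sets. -/
lemma cover_lemma {m : ℕ} (Pf : Finset (Set (Vec m))) :
    ∀ (_ : ∀ ρ ∈ Pf, IsClosed ρ) (σ N : Set (Vec m)), IsOpen N → (σ ∩ N).Nonempty →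
      σ ∩ N ⊆ ⋃₀ (↑Pf : Set (Set (Vec m))) →
      ∃ ρ ∈ Pf, ∃ y ∈ σ ∩ N, ∃ δ > (0:ℝ),
        σ ∩ Metric.ball y δ ⊆ ρ ∧ Metric.ball y δ ⊆ N := by
  classical
  induction Pf using Finset.induction_on with
  | empty =>
    intro _ σ N _ hne hsub
    obtain ⟨y, hy⟩ := hne
    simpa using hsub hy
  | @insert ρ₀ P hρ₀ IH =>
    intro hcl σ N hN hne hsub
    by_cases hc : (σ ∩ (N \ ρ₀)).Nonempty
    · have hcl' : ∀ ρ ∈ P, IsClosed ρ := fun ρ hρ => hcl ρ (Finset.mem_insert_of_mem hρ)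
      have hopen : IsOpen (N \ ρ₀) := hN.sdiff (hcl ρ₀ (Finset.mem_insert_self _ _))
      have hsub' : σ ∩ (N \ ρ₀) ⊆ ⋃₀ (↑P : Set (Set (Vec m))) := by
        rintro x ⟨hxσ, hxN, hxρ₀⟩
        rcases hsub ⟨hxσ, hxN⟩ with ⟨ρ, hρ, hxρ⟩
        rcases Finset.mem_insert.mp hρ with rfl | hρ
        · exact absurd hxρ hxρ₀
        · exact ⟨ρ, hρ, hxρ⟩
      obtain ⟨ρ, hρ, y, hy, δ, hδ, h1, h2⟩ := IH hcl' σ (N \ ρ₀) hopen hc hsub'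
      exact ⟨ρ, Finset.mem_insert_of_mem hρ, y, ⟨hy.1, hy.2.1⟩, δ, hδ, h1,
        h2.trans Set.diff_subset⟩
    · obtain ⟨y, hyσ, hyN⟩ := hne
      obtain ⟨δ, hδ, hball⟩ := Metric.isOpen_iff.mp hN y hyN
      refine ⟨ρ₀, Finset.mem_insert_self _ _, y, ⟨hyσ, hyN⟩, δ, hδ, ?_, hball⟩
      rintro x ⟨hxσ, hxb⟩
      by_contra hxρ₀
      exact hc ⟨x, hxσ, hball hxb, hxρ₀⟩

lemma exists_maximal {r : ℕ} (D : PolyComplex r) {τ : Set (Vec r)} (hτ : τ ∈ D.polys) :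
    ∃ σ, IsMaximalIn D σ ∧ τ ⊆ σ := by
  obtain ⟨σ, hσsep, hmax⟩ :=
    Set.Finite.exists_maximalFor (fun s => s) {s ∈ D.polys | τ ⊆ s}
      (D.finite.subset (Set.sep_subset _ _)) ⟨τ, hτ, subset_rfl⟩
  obtain ⟨hσmem, hστ⟩ := hσsep
  refine ⟨σ, ⟨hσmem, ?_⟩, hστ⟩
  intro ρ hρ hface
  have hsub : σ ⊆ ρ := hface.subset
  exact Set.Subset.antisymm (hmax ⟨hρ, hστ.trans hsub⟩ hsub) hsub

/-- Everything in `σ` is, up to translation by `y` and scaling, inside a small relative ball. -/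
lemma key_span {r : ℕ} {σ : Set (Vec r)} (hσ : Convex ℝ σ) {y : Vec r} (hy : y ∈ σ)
    {δ : ℝ} (hδ : 0 < δ) :
    vectorSpan ℝ σ ≤ Submodule.span ℝ {u : Vec r | y + u ∈ σ ∩ Metric.ball y δ} := by
  rw [vectorSpan_def, Submodule.span_le]
  rintro _ ⟨a, ha, b, hb, rfl⟩
  have key : ∀ s ∈ σ, s - y ∈ Submodule.span ℝ {u : Vec r | y + u ∈ σ ∩ Metric.ball y δ} := by
    intro s hs
    set t : ℝ := min 1 (δ / (2 * (‖s - y‖ + 1))) with ht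
    have hpos : 0 < δ / (2 * (‖s - y‖ + 1)) := by positivity
    have ht0 : 0 < t := lt_min one_pos hpos
    have ht1 : t ≤ 1 := min_le_left _ _
    have hmem : y + t • (s - y) ∈ σ := hσ.add_smul_sub_mem hy hs ⟨le_of_lt ht0, ht1⟩
    have hball : y + t • (s - y) ∈ Metric.ball y δ := by
      rw [Metric.mem_ball, dist_eq_norm]
      have : y + t • (s - y) - y = t • (s - y) := by abel
      rw [this, norm_smul, Real.norm_eq_abs, abs_of_pos ht0]
      calc t * ‖s - y‖ ≤ (δ / (2 * (‖s - y‖ + 1))) * ‖s - y‖ := by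
            apply mul_le_mul_of_nonneg_right (min_le_right _ _) (norm_nonneg _)
        _ < δ := by
            rw [div_mul_eq_mul_div, div_lt_iff₀ (by positivity)]
            nlinarith [norm_nonneg (s - y)]
    have hspan : t • (s - y) ∈ Submodule.span ℝ {u : Vec r | y + u ∈ σ ∩ Metric.ball y δ} :=
      Submodule.subset_span ⟨hmem, hball⟩
    have := Submodule.smul_mem _ t⁻¹ hspan
    rwa [smul_smul, inv_mul_cancel₀ (ne_of_gt ht0), one_smul] at this
  have hab : a - b = (a - y) - (b - y) := by abel
  show a - b ∈ _
  rw [hab]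
  exact Submodule.sub_mem _ (key a ha) (key b hb)

lemma deriv_mem_vectorSpan {r' r : ℕ} {sF : Vec r' → Vec r} {V' : Set (Vec r')}
    (hV' : IsOpen V') (hsF : ContDiffOn ℝ (⊤ : ℕ∞) sF V') {y : Vec r'} (hy : y ∈ V')
    {u : Vec r'} {σ : Set (Vec r)}
    (hseg : ∀ t ∈ Icc (0:ℝ) 1, sF (y + t • u) ∈ σ) :
    fderiv ℝ sF y u ∈ vectorSpan ℝ σ := by
  have hdiff : DifferentiableAt ℝ sF y :=
    (hsF.differentiableOn (by simp)).differentiableAt (hV'.mem_nhds hy)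
  set g : ℝ → Vec r := fun t => sF (y + t • u) with hg
  have hline : HasDerivAt (fun t : ℝ => y + t • u) u 0 := by
    simpa using ((hasDerivAt_id (0:ℝ)).smul_const u).const_add y
  have hgd : HasDerivAt g (fderiv ℝ sF y u) 0 := by
    have hF : HasFDerivAt sF (fderiv ℝ sF y) ((fun t : ℝ => y + t • u) 0) := by
      simpa using hdiff.hasFDerivAt
    have := hF.comp_hasDerivAt 0 hline
    exact this
  have hslope : Filter.Tendsto (slope g 0) (nhdsWithin 0 {(0:ℝ)}ᶜ) (nhds (fderiv ℝ sF y u)) :=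
    hasDerivAt_iff_tendsto_slope.mp hgd
  have hne : (nhdsWithin (0:ℝ) (Ioc 0 1)).NeBot := by
    rw [← mem_closure_iff_nhdsWithin_neBot, closure_Ioc (zero_ne_one' ℝ)]
    exact ⟨le_refl 0, zero_le_one⟩
  have hsub : Ioc (0:ℝ) 1 ⊆ {(0:ℝ)}ᶜ := fun t ht => ne_of_gt ht.1
  have hslope' : Filter.Tendsto (slope g 0) (nhdsWithin 0 (Ioc 0 1))
      (nhds (fderiv ℝ sF y u)) :=
    hslope.mono_left (nhdsWithin_mono _ hsub)
  have hclosed : IsClosed (vectorSpan ℝ σ : Set (Vec r)) :=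
    Submodule.closed_of_finiteDimensional _
  refine hclosed.mem_of_tendsto hslope' ?_
  filter_upwards [self_mem_nhdsWithin] with t ht
  have h0 : g 0 ∈ σ := hseg 0 ⟨le_refl 0, zero_le_one⟩
  have hts : g t ∈ σ := hseg t ⟨le_of_lt ht.1, ht.2⟩
  have : slope g 0 t = (t - 0)⁻¹ • (g t - g 0) := by
    rw [slope_def_module]
  rw [this]
  exact Submodule.smul_mem _ _ (vsub_mem_vectorSpan ℝ hts h0)

lemma zero_of_dense {r' : ℕ} {f : Vec r' → ℝ} {x : Vec r'} (hf : ContinuousAt f x)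
    (h : ∀ ε > (0:ℝ), ∃ y, dist y x < ε ∧ f y = 0) : f x = 0 := by
  by_contra hne
  have hpos : 0 < |f x| := abs_pos.mpr hne
  obtain ⟨δ, hδ, hq⟩ := Metric.continuousAt_iff.mp hf |f x| hpos
  obtain ⟨y, hyx, hy0⟩ := h δ hδ
  have := hq hyx
  rw [hy0, Real.dist_eq] at this
  simp only [zero_sub, abs_neg] at this
  exact lt_irrefl _ this



lemma support_eq_sUnion {r : ℕ} (C : PolyComplex r) :
    C.support = ⋃₀ C.polys := by
  rw [Set.sUnion_eq_biUnion]; rfl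

lemma subset_support {r : ℕ} (C : PolyComplex r) {σ : Set (Vec r)} (hσ : σ ∈ C.polys) :
    σ ⊆ C.support := by
  intro x hx
  exact Set.mem_biUnion hσ hx

/-- Transfer of the "restricts to zero" property between complexes sharing `Ω`. -/
lemma transfer {r p q : ℕ} (C D : PolyComplex r) (Ω : Set (Vec r))
    (hΩC : OpenInSupport C Ω) (hΩD : OpenInSupport D Ω)
    (W : Set (Vec r)) (hW : IsOpen W) (hΩW : Ω ⊆ W)
    (β : SFd r p q) (hβ : IsSuperformOn W β)
    (hzero : RestrictsToZero C Ω β) : RestrictsToZero D Ω β := by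
  obtain ⟨UC, hUC, hΩeqC⟩ := hΩC
  obtain ⟨UD, hUD, hΩeqD⟩ := hΩD
  intro σ hσ z hz v w hv hw
  have hzW : z ∈ W := hΩW hz.2
  have hcont : ContinuousAt (fun y => β y v w) z :=
    (hβ.2.2 v w).continuousOn.continuousAt (hW.mem_nhds hzW)
  apply zero_of_dense hcont
  intro ε hε
  have hcl : ∀ ρ ∈ C.finite.toFinset, IsClosed ρ := fun ρ hρ =>
    poly_closed (C.poly_mem ρ (C.finite.mem_toFinset.mp hρ))
  have hzUD : z ∈ UD := by
    have := hz.2; rw [hΩeqD] at this; exact this.1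
  have hmemσΩ : ∀ {a : Vec r}, a ∈ σ → a ∈ UD → a ∈ Ω := by
    intro a haσ haU
    rw [hΩeqD]; exact ⟨haU, subset_support D hσ haσ⟩
  have hsub : σ ∩ (UD ∩ Metric.ball z ε) ⊆ ⋃₀ (↑C.finite.toFinset : Set (Set (Vec r))) := by
    rintro a ⟨haσ, haU, _⟩
    have haΩ : a ∈ Ω := hmemσΩ haσ haU
    have : a ∈ C.support := by rw [hΩeqC] at haΩ; exact haΩ.2
    rw [support_eq_sUnion] at this
    rwa [C.finite.coe_toFinset]
  obtain ⟨ρ, hρP, y, hy, δ, hδ, h1, h2⟩ :=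
    cover_lemma C.finite.toFinset hcl σ (UD ∩ Metric.ball z ε)
      (hUD.inter Metric.isOpen_ball) ⟨z, hz.1, hzUD, Metric.mem_ball_self hε⟩ hsub
  have hρ : ρ ∈ C.polys := C.finite.mem_toFinset.mp hρP
  have hyρ : y ∈ ρ := h1 ⟨hy.1, Metric.mem_ball_self hδ⟩
  have hyΩ : y ∈ Ω := hmemσΩ hy.1 hy.2.1
  have hspan : vectorSpan ℝ σ ≤ vectorSpan ℝ ρ := by
    refine (key_span (poly_convex (D.poly_mem σ hσ)) hy.1 hδ).trans ?_
    rw [Submodule.span_le]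
    rintro u hu
    have : u = (y + u) - y := by abel
    rw [this]
    exact vsub_mem_vectorSpan ℝ (h1 hu) hyρ
  refine ⟨y, ?_, hzero ρ hρ y ⟨hyρ, hyΩ⟩ v w (fun i => hspan (hv i)) (fun j => hspan (hw j))⟩
  have := hy.2.2
  rwa [Metric.mem_ball] at this

/-- Pullback criterion: with `Ω' ⊆ |𝒞'|`, `Ω ⊆ |𝒞|` open,
`s_F` smooth near `Ω'` with `s_F(Ω') ⊆ Ω` and `L_F` linear, if there are
complexes `𝒟'`, `𝒟` with `Ω'`, `Ω` open in their supports such that every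
maximal `σ' ∈ 𝒟'` admits a maximal `σ ∈ 𝒟` with `s_F(σ' ∩ Ω') ⊆ σ` and
`L_F(L_{σ'}) ⊆ L_σ`, then for every superform `β` on an open neighbourhood `W`
of `Ω` with `W ∩ |𝒞| = Ω` whose restriction to `Ω` vanishes, the pullback
`F*β = (s_F)* ⊗ (L_F)* (β)` restricts to zero on `Ω'`. -/
theorem pullback_criterion {r' r p q : ℕ}
    (C' : PolyComplex r') (C : PolyComplex r)
    (D' : PolyComplex r') (D : PolyComplex r)
    (Ω' : Set (Vec r')) (Ω : Set (Vec r))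
    (hΩ'C' : OpenInSupport C' Ω') (hΩC : OpenInSupport C Ω)
    (hΩ'D' : OpenInSupport D' Ω') (hΩD : OpenInSupport D Ω)
    (V' : Set (Vec r')) (hV' : IsOpen V') (hΩ'V' : Ω' ⊆ V')
    (sF : Vec r' → Vec r) (hsF : ContDiffOn ℝ (⊤ : ℕ∞) sF V')
    (hmaps : sF '' Ω' ⊆ Ω)
    (LF : Vec r' →ₗ[ℝ] Vec r)
    (hcond : ∀ σ', IsMaximalIn D' σ' → ∃ σ, IsMaximalIn D σ ∧
      sF '' (σ' ∩ Ω') ⊆ σ ∧ ∀ u ∈ vectorSpan ℝ σ', LF u ∈ vectorSpan ℝ σ)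
    (W : Set (Vec r)) (hW : IsOpen W) (hΩW : Ω ⊆ W) (hWΩ : W ∩ C.support = Ω)
    (β : SFd r p q) (hβ : IsSuperformOn W β)
    (hzero : RestrictsToZero C Ω β) :
    RestrictsToZero C' Ω' (pairPB sF (fun y => LF y) β) := by
  intro σ' hσ' x hx v w hv hw
  obtain ⟨U', hU', hΩ'eq⟩ := hΩ'C'
  have hD : RestrictsToZero D Ω β := transfer C D Ω hΩC hΩD W hW hΩW β hβ hzero
  have hxΩ' : x ∈ Ω' := hx.2
  have hxV' : x ∈ V' := hΩ'V' hxΩ'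
  have hxΩ : sF x ∈ Ω := hmaps ⟨x, hxΩ', rfl⟩
  have hxW : sF x ∈ W := hΩW hxΩ
  set f : Vec r' → ℝ :=
    fun y => β (sF y) (fun i => fderiv ℝ sF y (v i)) (fun j => LF (w j)) with hf
  show f x = 0
  -- continuity of `f` at `x`
  set g : Vec r' → ℝ := fun y =>
    ∑ k : Fin p → Fin r, (∏ i, (fderiv ℝ sF y (v i)) (k i)) *
      ∑ l : Fin q → Fin r, (∏ j, (LF (w j)) (l j)) * β (sF y) (fun i => (Pi.single (k i) 1 : Vec r)) (fun j => (Pi.single (l j) 1 : Vec r)) with hg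
  have hO : IsOpen (V' ∩ sF ⁻¹' W) := hsF.continuousOn.isOpen_inter_preimage hV' hW
  have hxO : x ∈ V' ∩ sF ⁻¹' W := ⟨hxV', hxW⟩
  have hfg : ∀ y ∈ V' ∩ sF ⁻¹' W, f y = g y := by
    intro y hy
    have hyW : sF y ∈ W := hy.2
    rw [hf, hg]
    simp only
    rw [ml_expand _ (hβ.1 (sF y) hyW _) (fun i => fderiv ℝ sF y (v i))]
    refine Finset.sum_congr rfl fun k _ => ?_
    congr 1
    rw [ml_expand _ (hβ.2.1 (sF y) hyW (fun i => (Pi.single (k i) 1 : Vec r))) (fun j => LF (w j))]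
  have hfdc : ContinuousAt (fderiv ℝ sF) x :=
    (hsF.continuousOn_fderiv_of_isOpen hV' (by exact_mod_cast le_top)).continuousAt
      (hV'.mem_nhds hxV')
  have hsFc : ContinuousAt sF x := hsF.continuousOn.continuousAt (hV'.mem_nhds hxV')
  have hgc : ContinuousAt g x := by
    apply tendsto_finset_sum
    intro k _
    apply Filter.Tendsto.mul
    · apply tendsto_finset_prod
      intro i _
      exact ((continuous_apply (k i)).comp
        (ContinuousLinearMap.apply ℝ (Vec r) (v i)).continuous).continuousAt.comp hfdc
    · apply tendsto_finset_sum
      intro l _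
      apply Filter.Tendsto.mul tendsto_const_nhds
      exact ((hβ.2.2 (fun i => (Pi.single (k i) 1 : Vec r)) (fun j => (Pi.single (l j) 1 : Vec r))).continuousOn.continuousAt (hW.mem_nhds hxW)).comp hsFc
  have hfc : ContinuousAt f x := by
    apply hgc.congr
    filter_upwards [hO.mem_nhds hxO] with y hy
    exact (hfg y hy).symm
  apply zero_of_dense hfc
  intro ε hε
  -- find a good point nearby
  have hσ'sub : σ' ⊆ C'.support := subset_support C' hσ'
  have hmemΩ' : ∀ {a : Vec r'}, a ∈ σ' → a ∈ U' → a ∈ Ω' := by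
    intro a haσ haU
    rw [hΩ'eq]; exact ⟨haU, hσ'sub haσ⟩
  have hxU' : x ∈ U' := by
    have := hxΩ'; rw [hΩ'eq] at this; exact this.1
  have hΩ'D'sup : Ω' ⊆ D'.support := by
    obtain ⟨U₂, hU₂, hΩ'eq₂⟩ := hΩ'D'
    rw [hΩ'eq₂]; exact fun a ha => ha.2
  have hcl : ∀ ρ ∈ D'.finite.toFinset, IsClosed ρ := fun ρ hρ =>
    poly_closed (D'.poly_mem ρ (D'.finite.mem_toFinset.mp hρ))
  have hsub : σ' ∩ (U' ∩ Metric.ball x ε) ⊆ ⋃₀ (↑D'.finite.toFinset : Set (Set (Vec r'))) := by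
    rintro a ⟨haσ, haU, _⟩
    have : a ∈ D'.support := hΩ'D'sup (hmemΩ' haσ haU)
    rw [support_eq_sUnion] at this
    rwa [D'.finite.coe_toFinset]
  obtain ⟨τ, hτP, y, hy, δ, hδ, h1, h2⟩ :=
    cover_lemma D'.finite.toFinset hcl σ' (U' ∩ Metric.ball x ε)
      (hU'.inter Metric.isOpen_ball) ⟨x, hx.1, hxU', Metric.mem_ball_self hε⟩ hsub
  have hτ : τ ∈ D'.polys := D'.finite.mem_toFinset.mp hτP
  obtain ⟨σ'', hσ''max, hτσ''⟩ := exists_maximal D' hτ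
  obtain ⟨σ, hσmax, himg, hLFspan⟩ := hcond σ'' hσ''max
  have hyσ' : y ∈ σ' := hy.1
  have hyΩ' : y ∈ Ω' := hmemΩ' hyσ' hy.2.1
  have hyball : ∀ {a : Vec r'}, a ∈ σ' → a ∈ Metric.ball y δ → a ∈ σ'' ∩ Ω' := by
    intro a haσ hab
    refine ⟨hτσ'' (h1 ⟨haσ, hab⟩), ?_⟩
    exact hmemΩ' haσ (h2 hab).1
  have hyσ'' : y ∈ σ'' ∩ Ω' := hyball hyσ' (Metric.mem_ball_self hδ)
  have hconv : Convex ℝ σ' := poly_convex (C'.poly_mem σ' hσ')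
  have hkey := key_span hconv hyσ' hδ
  -- the d''-block vectors
  have hw' : ∀ j, LF (w j) ∈ vectorSpan ℝ σ := by
    intro j
    apply hLFspan
    have hle : vectorSpan ℝ σ' ≤ vectorSpan ℝ σ'' := by
      refine hkey.trans ?_
      rw [Submodule.span_le]
      rintro u hu
      have : u = (y + u) - y := by abel
      rw [this]
      exact vsub_mem_vectorSpan ℝ (hyball hu.1 hu.2).1 hyσ''.1
    exact hle (hw j)
  -- the d'-block vectors
  have hv' : ∀ i, fderiv ℝ sF y (v i) ∈ vectorSpan ℝ σ := by
    intro i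
    have hle : vectorSpan ℝ σ' ≤
        (vectorSpan ℝ σ).comap (fderiv ℝ sF y : Vec r' →ₗ[ℝ] Vec r) := by
      refine hkey.trans ?_
      rw [Submodule.span_le]
      rintro u hu
      rw [SetLike.mem_coe, Submodule.mem_comap]
      have hseg : ∀ t ∈ Icc (0:ℝ) 1, sF (y + t • u) ∈ σ := by
        intro t ht
        have h1' : y + t • u = y + t • ((y + u) - y) := by
          congr 1; congr 1; abel
        have hptσ' : y + t • u ∈ σ' := by
          rw [h1']; exact hconv.add_smul_sub_mem hyσ' hu.1 ht
        have hptb : y + t • u ∈ Metric.ball y δ := by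
          rw [h1']
          exact (convex_ball y δ).add_smul_sub_mem (Metric.mem_ball_self hδ) hu.2 ht
        exact himg ⟨y + t • u, hyball hptσ' hptb, rfl⟩
      exact deriv_mem_vectorSpan hV' hsF (hΩ'V' hyΩ') hseg
    exact hle (hv i)
  have hsFy : sF y ∈ σ ∩ Ω :=
    ⟨himg ⟨y, hyσ'', rfl⟩, hmaps ⟨y, hyΩ', rfl⟩⟩
  refine ⟨y, ?_, hD σ hσmax.1 (sF y) hsFy _ _ hv' hw'⟩
  have := hy.2.2
  rwa [Metric.mem_ball] at this
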